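/- Proposition A, part 2 (existence of translation invariant two-forms with non-zero torsion). Let 𝔤 be a finite-dimensional real semisimple Lie algebra whose Killing form κ is negative definite (compact type), with dim 𝔤 > 3. Then there exist a nonzero element R ∈ 𝔤 and a skew-symmetric bilinear form p on 𝔤 such that p is ad(R)-invariant, i.e. p([R,u],v) + p(u,[R,v]) = 0 for all u,v ∈ 𝔤, and p has non-zero torsion, i.e. the torsion form T_p(u,v,w) := p([u,v],w) + p([v,w],u) + p([w,u],v) is not identically zero. -/

import Mathlib

noncomputable section

/-- The Killing form `κ(u,v) = trace(ad u ∘ ad v)` of a Lie algebra. -/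
def killing (𝓖 : Type*) [LieRing 𝓖] [LieAlgebra ℝ 𝓖] (u v : 𝓖) : ℝ :=
  LinearMap.trace ℝ 𝓖 ((LieAlgebra.ad ℝ 𝓖 u) ∘ₗ (LieAlgebra.ad ℝ 𝓖 v))


section engine
variable {L : Type*} [LieRing L] [LieAlgebra ℝ L]

lemma aux_hp (u v : L) (θ μ : ℝ) (w x y : L)
    (huv : ⁅u,v⁆ = θ • w) (hx : ⁅u,x⁆ = μ • y) :
    ⁅u,⁅v,x⁆⁆ = θ • ⁅w,x⁆ + μ • ⁅v,y⁆ := by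
  rw [leibniz_lie u v x, huv, hx, smul_lie, lie_smul]

lemma aux_F_wt (u v w : L) (θ μ : ℝ)
    (huv : ⁅u,v⁆ = θ • w) (huw : ⁅u,w⁆ = -θ • v)
    (x y : L) (hx : ⁅u,x⁆ = μ • y) (hy : ⁅u,y⁆ = -μ • x) :
    ⁅u, ⁅v,x⁆ + ⁅w,y⁆⁆ = (μ - θ) • (⁅v,y⁆ - ⁅w,x⁆) ∧
    ⁅u, ⁅v,y⁆ - ⁅w,x⁆⁆ = -(μ - θ) • (⁅v,x⁆ + ⁅w,y⁆) := by
  have hp := aux_hp u v θ μ w x y huv hx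
  have hs := aux_hp u w (-θ) (-μ) v y x huw hy
  have hq := aux_hp u w (-θ) μ v x y huw hx
  have hr := aux_hp u v θ (-μ) w y x huv hy
  constructor
  · rw [lie_add, hp, hs]; module
  · rw [lie_sub, hq, hr]; module

lemma aux_E_wt (u v w : L) (θ μ : ℝ)
    (huv : ⁅u,v⁆ = θ • w) (huw : ⁅u,w⁆ = -θ • v)
    (x y : L) (hx : ⁅u,x⁆ = μ • y) (hy : ⁅u,y⁆ = -μ • x) :
    ⁅u, ⁅v,x⁆ - ⁅w,y⁆⁆ = (μ + θ) • (⁅w,x⁆ + ⁅v,y⁆) ∧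
    ⁅u, ⁅w,x⁆ + ⁅v,y⁆⁆ = -(μ + θ) • (⁅v,x⁆ - ⁅w,y⁆) := by
  have hp := aux_hp u v θ μ w x y huv hx
  have hs := aux_hp u w (-θ) (-μ) v y x huw hy
  have hq := aux_hp u w (-θ) μ v x y huw hx
  have hr := aux_hp u v θ (-μ) w y x huv hy
  constructor
  · rw [lie_sub, hp, hs]; module
  · rw [lie_add, hq, hr]; module

lemma aux_comm_fst (u v w : L) (c : ℝ) (hvw : ⁅v,w⁆ = c • u) (x y : L) :
    ⁅v, ⁅v,x⁆ + ⁅w,y⁆⁆ - ⁅w, ⁅v,y⁆ - ⁅w,x⁆⁆ =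
      (⁅v, ⁅v,x⁆ - ⁅w,y⁆⁆ + ⁅w, ⁅w,x⁆ + ⁅v,y⁆⁆) + (2*c) • ⁅u,y⁆ := by
  have hk : ⁅v,⁅w,y⁆⁆ = ⁅w,⁅v,y⁆⁆ + c • ⁅u,y⁆ := by
    have := lie_lie v w y
    rw [hvw, smul_lie] at this
    rw [this]; abel
  simp only [lie_add, lie_sub]
  rw [hk]; module

lemma aux_comm_snd (u v w : L) (c : ℝ) (hvw : ⁅v,w⁆ = c • u) (x y : L) :
    ⁅w, ⁅v,x⁆ + ⁅w,y⁆⁆ + ⁅v, ⁅v,y⁆ - ⁅w,x⁆⁆ =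
      (⁅v, ⁅w,x⁆ + ⁅v,y⁆⁆ - ⁅w, ⁅v,x⁆ - ⁅w,y⁆⁆) - (2*c) • ⁅u,x⁆ := by
  have hk : ⁅v,⁅w,x⁆⁆ = ⁅w,⁅v,x⁆⁆ + c • ⁅u,x⁆ := by
    have := lie_lie v w x
    rw [hvw, smul_lie] at this
    rw [this]; abel
  simp only [lie_add, lie_sub]
  rw [hk]; module

end engine

open Module Metric

local notation "⟪" x ", " y "⟫" => @inner ℝ _ _ x y

lemma aux_eigen {E : Type*} [NormedAddCommGroup E] [InnerProductSpace ℝ E]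
    [FiniteDimensional ℝ E] [Nontrivial E] {T : E →ₗ[ℝ] E} (hT : T.IsSymmetric) :
    ∃ (μ : ℝ) (x : E), x ≠ 0 ∧ T x = μ • x ∧ ∀ y : E, ⟪T y, y⟫ ≤ μ * ⟪y, y⟫ := by
  haveI := FiniteDimensional.proper_rclike ℝ E
  let T' := hT.toSelfAdjoint
  obtain ⟨x, hx⟩ : ∃ x : E, x ≠ 0 := exists_ne 0
  have H₁ : IsCompact (sphere (0 : E) ‖x‖) := isCompact_sphere _ _
  have H₂ : (sphere (0 : E) ‖x‖).Nonempty := ⟨x, by simp⟩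
  obtain ⟨x₀, hx₀', hTx₀⟩ :=
    H₁.exists_isMaxOn H₂ T'.val.reApplyInnerSelf_continuous.continuousOn
  have hx₀norm : ‖x₀‖ = ‖x‖ := by simpa using hx₀'
  have hmax : IsMaxOn T'.val.reApplyInnerSelf (sphere 0 ‖x₀‖) x₀ := by
    simpa only [← hx₀norm] using hTx₀
  have hx₀_ne : x₀ ≠ 0 := by
    have : ‖x₀‖ ≠ 0 := by simp [hx₀norm, hx]
    simpa [← norm_eq_zero, Ne] using this
  have hev := T'.prop.hasEigenvector_of_isMaxOn hx₀_ne hmax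
  set μ : ℝ := ↑(⨆ x : { x : E // x ≠ 0 }, T'.val.rayleighQuotient x) with hμ
  have hTx : T x₀ = μ • x₀ := by
    have := hev.apply_eq_smul
    simpa [T', LinearMap.IsSymmetric.coe_toSelfAdjoint] using this
  refine ⟨μ, x₀, hx₀_ne, hTx, ?_⟩
  -- The eigenvalue equals the Rayleigh value at x₀.
  have hval : ⟪T x₀, x₀⟫ = μ * ⟪x₀, x₀⟫ := by
    rw [hTx, real_inner_smul_left]
  have hx₀pos : (0:ℝ) < ‖x₀‖ := norm_pos_iff.mpr hx₀_ne
  intro y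
  rcases eq_or_ne y 0 with rfl | hy
  · simp
  · have hypos : (0:ℝ) < ‖y‖ := norm_pos_iff.mpr hy
    set z : E := (‖x₀‖ / ‖y‖) • y with hz
    have hzs : z ∈ sphere (0 : E) ‖x₀‖ := by
      simp [hz, norm_smul, abs_of_pos (div_pos hx₀pos hypos),
        div_mul_cancel₀ _ (ne_of_gt hypos)]
    have hle := hmax hzs
    have hTz : T'.val.reApplyInnerSelf z = (‖x₀‖ / ‖y‖)^2 * ⟪T y, y⟫ := by
      have : T'.val z = (‖x₀‖ / ‖y‖) • T y := by
        simp [hz, T', LinearMap.IsSymmetric.toSelfAdjoint_apply]; rfl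
      simp [ContinuousLinearMap.reApplyInnerSelf_apply, this, hz,
        real_inner_smul_left, real_inner_smul_right, (show T'.val y = T y from rfl)]
      ring
    have hTx₀' : T'.val.reApplyInnerSelf x₀ = μ * ⟪x₀, x₀⟫ := by
      simp [ContinuousLinearMap.reApplyInnerSelf_apply, T',
        LinearMap.IsSymmetric.toSelfAdjoint_apply, (show (hT.toSelfAdjoint : E →L[ℝ] E) x₀ = T x₀ from rfl), hval]
    have hle' : T'.val.reApplyInnerSelf z ≤ T'.val.reApplyInnerSelf x₀ := hle
    rw [hTz, hTx₀'] at hle'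
    have hinner_x₀ : ⟪x₀, x₀⟫ = ‖x₀‖^2 := real_inner_self_eq_norm_sq x₀
    have hinner_y : ⟪y, y⟫ = ‖y‖^2 := real_inner_self_eq_norm_sq y
    rw [hinner_x₀] at hle'
    have ha : (0:ℝ) < ‖x₀‖^2 := pow_pos hx₀pos 2
    have hb : (0:ℝ) < ‖y‖^2 := pow_pos hypos 2
    rw [div_pow] at hle'
    have h4 := mul_le_mul_of_nonneg_right hle' (le_of_lt hb)
    have h5 : ‖x₀‖^2 * ⟪T y, y⟫ ≤ ‖x₀‖^2 * (μ * ‖y‖^2) := by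
      have hbne : (‖y‖:ℝ)^2 ≠ 0 := ne_of_gt hb
      calc ‖x₀‖^2 * ⟪T y, y⟫ = ‖x₀‖^2 / ‖y‖^2 * ⟪T y, y⟫ * ‖y‖^2 := by
            field_simp
        _ ≤ μ * ‖x₀‖^2 * ‖y‖^2 := h4
        _ = ‖x₀‖^2 * (μ * ‖y‖^2) := by ring
    rw [hinner_y]
    exact le_of_mul_le_mul_left h5 ha


lemma aux_eigen_bilin {E : Type*} [AddCommGroup E] [Module ℝ E] [FiniteDimensional ℝ E]
    (B : E →ₗ[ℝ] E →ₗ[ℝ] ℝ) (hBsymm : ∀ x y, B x y = B y x)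
    (hBpos : ∀ x : E, x ≠ 0 → 0 < B x x)
    (W : Submodule ℝ E) (hW : W ≠ ⊥)
    (S : E →ₗ[ℝ] E) (hSsym : ∀ x y, B (S x) y = B x (S y))
    (hSW : ∀ x ∈ W, S x ∈ W) :
    ∃ (μ : ℝ) (x : E), x ∈ W ∧ x ≠ 0 ∧ S x = μ • x ∧
      ∀ y ∈ W, B (S y) y ≤ μ * B y y := by
  have hB0 : ∀ x : E, 0 ≤ B x x := by
    intro x
    rcases eq_or_ne x 0 with rfl | hx
    · simp
    · exact (hBpos x hx).le
  letI core : InnerProductSpace.Core ℝ ↥W :=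
    { inner := fun a b => B a b
      conj_inner_symm := fun a b => by simpa using hBsymm (b : E) (a : E)
      re_inner_nonneg := fun a => by simpa using hB0 (a : E)
      add_left := fun a b c => by simp
      smul_left := fun a b r => by simp
      definite := fun a ha => by
        by_contra h
        have : (a : E) ≠ 0 := fun hc => h (Subtype.ext hc)
        exact absurd (by simpa using ha) (ne_of_gt (hBpos _ this)) }
  letI : NormedAddCommGroup ↥W := core.toNormedAddCommGroup
  letI : InnerProductSpace ℝ ↥W := InnerProductSpace.ofCore core.toCore
  haveI : Nontrivial ↥W := Submodule.nontrivial_iff_ne_bot.mpr hW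
  set T : ↥W →ₗ[ℝ] ↥W := S.restrict hSW with hT
  have hinner : ∀ a b : ↥W, (inner ℝ a b : ℝ) = B (a : E) (b : E) := fun a b => rfl
  have hTsym : T.IsSymmetric := by
    intro a b
    rw [hinner, hinner]
    have hTa : ((T a : ↥W) : E) = S (a : E) := rfl
    have hTb : ((T b : ↥W) : E) = S (b : E) := rfl
    rw [hTa, hTb, hSsym]
  obtain ⟨μ, x', hx'ne, hx'eig, hx'ray⟩ := aux_eigen hTsym
  refine ⟨μ, (x' : E), x'.2, fun hc => hx'ne (Subtype.ext hc), ?_, ?_⟩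
  · have : ((T x' : ↥W) : E) = S (x' : E) := rfl
    have h2 : ((μ • x' : ↥W) : E) = μ • (x' : E) := rfl
    rw [← this, hx'eig, h2]
  · intro y hy
    have := hx'ray ⟨y, hy⟩
    rw [hinner, hinner] at this
    exact this

set_option maxHeartbeats  2000000 in
lemma aux_rank {G : Type*} [LieRing G] [LieAlgebra ℝ G] [FiniteDimensional ℝ G]
    (κ : G →ₗ[ℝ] G →ₗ[ℝ] ℝ)
    (hsym : ∀ a b, κ a b = κ b a)
    (hinv : ∀ a b c, κ ⁅a,b⁆ c = κ a ⁅b,c⁆)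
    (hneg : ∀ a : G, a ≠ 0 → κ a a < 0)
    (hdim : 3 < Module.finrank ℝ G) :
    ∃ R X : G, R ≠ 0 ∧ ⁅R,X⁆ = 0 ∧ ∀ t : ℝ, X ≠ t • R := by
  by_contra hcon
  push_neg at hcon
  -- basic facts about the positive definite form n
  obtain ⟨n, hn⟩ : ∃ n : G → ℝ, ∀ z, n z = -κ z z := ⟨fun z => -κ z z, fun z => rfl⟩
  have hn0 : ∀ z, 0 ≤ n z := by
    intro z
    rcases eq_or_ne z 0 with rfl | hz
    · simp [hn]
    · have := hneg z hz; rw [hn]; linarith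
  have hnpos : ∀ z : G, z ≠ 0 → 0 < n z := by
    intro z hz; have := hneg z hz; rw [hn]; linarith
  have hnz : ∀ z : G, n z = 0 → z = 0 := by
    intro z h
    by_contra hz
    exact absurd h (ne_of_gt (hnpos z hz))
  have hnsmul : ∀ (t : ℝ) (z : G), n (t • z) = t^2 * n z := by
    intro t z; rw [hn, hn]; simp only [map_smul, LinearMap.smul_apply, smul_eq_mul]; ring
  have hskew : ∀ a b c : G, κ b ⁅a,c⁆ = -κ ⁅a,b⁆ c := by
    intro a b c
    rw [hsym, hinv]
    have : ⁅c,b⁆ = -⁅b,c⁆ := by rw [← lie_skew]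
    rw [this, map_neg, ← hinv]
  -- nontriviality
  haveI : Nontrivial G := by
    apply Module.nontrivial_of_finrank_pos (R := ℝ)
    omega
  obtain ⟨u₀, hu₀⟩ : ∃ u₀ : G, u₀ ≠ 0 := exists_ne 0
  have hker : ∀ z : G, ⁅u₀,z⁆ = 0 → ∃ t : ℝ, z = t • u₀ := fun z h => hcon u₀ z hu₀ h
  have hnu₀ : 0 < n u₀ := hnpos u₀ hu₀
  -- ad u₀ is nonzero
  have hAne : ∃ y : G, ⁅u₀,y⁆ ≠ 0 := by
    by_contra h
    push_neg at h
    have hsp : Submodule.span ℝ {u₀} = ⊤ := by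
      rw [Submodule.eq_top_iff']
      intro y
      obtain ⟨t, ht⟩ := hker y (h y)
      rw [ht]
      exact Submodule.smul_mem _ t (Submodule.mem_span_singleton_self u₀)
    have h1 := finrank_span_singleton hu₀ (K := ℝ)
    rw [hsp, finrank_top] at h1
    omega
  -- the operator S = -(ad u₀)²
  obtain ⟨S, hSapp⟩ : ∃ S : G →ₗ[ℝ] G, ∀ x, S x = -⁅u₀,⁅u₀,x⁆⁆ := by
    refine ⟨-((LieAlgebra.ad ℝ G u₀) ∘ₗ (LieAlgebra.ad ℝ G u₀)), fun x => ?_⟩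
    simp [LieAlgebra.ad_apply]
  obtain ⟨B, hBapp⟩ : ∃ B : G →ₗ[ℝ] G →ₗ[ℝ] ℝ, ∀ x y, B x y = -κ x y :=
    ⟨-κ, fun x y => rfl⟩
  have hBsymm : ∀ x y, B x y = B y x := by intro x y; simp [hBapp, hsym x y]
  have hBpos : ∀ x : G, x ≠ 0 → 0 < B x x := by
    intro x hx; rw [hBapp]; have := hneg x hx; linarith
  have hSsym : ∀ x y, B (S x) y = B x (S y) := by
    intro x y
    have h0 := hskew u₀ ⁅u₀,x⁆ y
    have h1 : κ ⁅u₀,⁅u₀,x⁆⁆ y = -κ ⁅u₀,x⁆ ⁅u₀,y⁆ := by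
      have h0' := hsym ⁅u₀,x⁆ ⁅u₀,y⁆
      linarith [hskew u₀ ⁅u₀,x⁆ y]
    have h2 : κ x ⁅u₀,⁅u₀,y⁆⁆ = -κ ⁅u₀,x⁆ ⁅u₀,y⁆ := hskew u₀ x ⁅u₀,y⁆
    rw [hBapp, hBapp, hSapp, hSapp, map_neg, LinearMap.neg_apply, neg_neg, map_neg, neg_neg, h1, h2]
  have hBSn : ∀ y : G, B (S y) y = n ⁅u₀,y⁆ := by
    intro y
    have h1 := hskew u₀ ⁅u₀,y⁆ y
    rw [hBapp, hSapp, hn, map_neg, LinearMap.neg_apply, neg_neg]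
    linarith
  -- top eigenvalue
  obtain ⟨μ, v₀, _, hv₀ne, hv₀eig, hrayall⟩ :=
    aux_eigen_bilin B hBsymm hBpos ⊤ (by simp) S hSsym (fun x _ => trivial)
  have hrayn : ∀ y : G, n ⁅u₀,y⁆ ≤ μ * n y := by
    intro y
    have := hrayall y trivial
    rw [hBSn, hBapp, ← hn] at this
    exact this
  have hμpos : 0 < μ := by
    obtain ⟨y₀, hy₀⟩ := hAne
    have h1 : 0 < n ⁅u₀,y₀⁆ := hnpos _ hy₀
    have h2 := hrayn y₀
    have h3 : y₀ ≠ 0 := by rintro rfl; simp at hy₀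
    have h4 := hnpos y₀ h3
    nlinarith
  set θ : ℝ := Real.sqrt μ with hθ
  have hθ2 : θ^2 = μ := Real.sq_sqrt hμpos.le
  have hθpos : 0 < θ := Real.sqrt_pos.mpr hμpos
  -- killing of overweight pairs
  have hkill : ∀ (ν : ℝ) (z₁ z₂ : G), ⁅u₀,z₁⁆ = ν • z₂ → ⁅u₀,z₂⁆ = -ν • z₁ →
      μ < ν^2 → z₁ = 0 ∧ z₂ = 0 := by
    intro ν z₁ z₂ h1 h2 hν
    have e1 : ν^2 * n z₂ ≤ μ * n z₁ := by
      have := hrayn z₁; rw [h1, hnsmul] at this; exact this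
    have e2 : ν^2 * n z₁ ≤ μ * n z₂ := by
      have := hrayn z₂; rw [h2, hnsmul, neg_sq] at this
      exact this
    have hadd : ν^2 * n z₂ + ν^2 * n z₁ ≤ μ * n z₁ + μ * n z₂ := add_le_add e1 e2
    have hsum0 : n z₁ + n z₂ ≤ 0 := by
      by_contra hpos
      push_neg at hpos
      have h6 := mul_lt_mul_of_pos_right hν hpos
      have h7 : μ * (n z₁ + n z₂) = μ * n z₁ + μ * n z₂ := by ring
      have h8 : ν^2 * (n z₁ + n z₂) = ν^2 * n z₂ + ν^2 * n z₁ := by ring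
      rw [h7, h8] at h6
      linarith
    have hz₁ : n z₁ = 0 := le_antisymm (by linarith [hn0 z₂]) (hn0 z₁)
    have hz₂ : n z₂ = 0 := le_antisymm (by linarith [hn0 z₁]) (hn0 z₂)
    exact ⟨hnz _ hz₁, hnz _ hz₂⟩
  -- construction of orthonormal eigen-pairs (su(2)-triples)
  have htriple : ∀ (lam : ℝ) (x : G), 0 < lam → x ≠ 0 →
      (-⁅u₀,⁅u₀,x⁆⁆ : G) = (lam^2) • x →
      ∃ e₁ e₂ : G, n e₁ = 1 ∧ n e₂ = 1 ∧ κ e₁ e₂ = 0 ∧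
        ⁅u₀,e₁⁆ = lam • e₂ ∧ ⁅u₀,e₂⁆ = -lam • e₁ ∧
        ⁅e₁,e₂⁆ = (lam / n u₀) • u₀ := by
    intro lam x hlam hxne hx
    have hlne : lam ≠ 0 := ne_of_gt hlam
    have hnx : 0 < n x := hnpos x hxne
    obtain ⟨s, hs⟩ : ∃ s : ℝ, s = (Real.sqrt (n x))⁻¹ := ⟨_, rfl⟩
    have hs2 : s^2 * n x = 1 := by
      rw [hs, ← Real.sqrt_inv, Real.sq_sqrt (by positivity)]
      field_simp
    obtain ⟨e₁, he₁⟩ : ∃ e₁ : G, e₁ = s • x := ⟨_, rfl⟩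
    obtain ⟨e₂, he₂⟩ : ∃ e₂ : G, e₂ = lam⁻¹ • ⁅u₀,e₁⁆ := ⟨_, rfl⟩
    have hne₁ : n e₁ = 1 := by rw [he₁, hnsmul, hs2]
    have hDe₁ : ⁅u₀,e₁⁆ = lam • e₂ := by
      rw [he₂, smul_smul, mul_inv_cancel₀ hlne, one_smul]
    have hD2e₁ : ⁅u₀,⁅u₀,e₁⁆⁆ = -(lam^2) • e₁ := by
      have : ⁅u₀,⁅u₀,e₁⁆⁆ = s • ⁅u₀,⁅u₀,x⁆⁆ := by rw [he₁, lie_smul, lie_smul]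
      rw [this, show ⁅u₀,⁅u₀,x⁆⁆ = -((lam^2)•x) by rw [← hx]; module]
      rw [he₁]; module
    have hDe₂ : ⁅u₀,e₂⁆ = -lam • e₁ := by
      rw [he₂, lie_smul, hD2e₁, smul_smul]
      rw [show lam⁻¹ * -lam^2 = -lam by field_simp]
    have hκe₁e₁ : κ e₁ e₁ = -1 := by
      have := hne₁; rw [hn] at this; linarith
    have hne₂ : n e₂ = 1 := by
      have h1 : κ e₂ e₂ = lam⁻¹ * lam⁻¹ * κ ⁅u₀,e₁⁆ ⁅u₀,e₁⁆ := by
        simp only [he₂, map_smul, LinearMap.smul_apply, smul_eq_mul]; ring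
      have h2 : κ ⁅u₀,e₁⁆ ⁅u₀,e₁⁆ = -κ ⁅u₀,⁅u₀,e₁⁆⁆ e₁ := hskew u₀ ⁅u₀,e₁⁆ e₁
      have h3 : κ ⁅u₀,⁅u₀,e₁⁆⁆ e₁ = -(lam^2) * κ e₁ e₁ := by
        rw [hD2e₁]; simp only [map_smul, LinearMap.smul_apply, smul_eq_mul]
      rw [hn, h1, h2, h3, hκe₁e₁]
      field_simp
    have horto : κ e₁ e₂ = 0 := by
      have h1 : κ e₁ ⁅u₀,e₁⁆ = -κ ⁅u₀,e₁⁆ e₁ := hskew u₀ e₁ e₁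
      have h2 : κ e₁ ⁅u₀,e₁⁆ = κ ⁅u₀,e₁⁆ e₁ := hsym _ _
      have h3 : κ e₁ ⁅u₀,e₁⁆ = 0 := by linarith
      rw [he₂, map_smul, smul_eq_mul, h3, mul_zero]
    have hbrk : ⁅u₀,⁅e₁,e₂⁆⁆ = 0 := by
      rw [leibniz_lie, hDe₁, hDe₂, smul_lie, lie_smul, lie_self, lie_self,
        smul_zero, smul_zero, add_zero]
    obtain ⟨t, ht⟩ := hker _ hbrk
    have hcoef : κ ⁅e₁,e₂⁆ u₀ = -lam := by
      rw [hinv]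
      have : ⁅e₂,u₀⁆ = lam • e₁ := by
        rw [← lie_skew, hDe₂]; module
      rw [this, map_smul, smul_eq_mul, hκe₁e₁]
      ring
    have hteq : t = lam / n u₀ := by
      rw [ht, map_smul, LinearMap.smul_apply, smul_eq_mul] at hcoef
      have hκu : κ u₀ u₀ = -n u₀ := by rw [hn]; ring
      rw [hκu] at hcoef
      have hnune : n u₀ ≠ 0 := ne_of_gt hnu₀
      field_simp
      linarith
    refine ⟨e₁, e₂, hne₁, hne₂, horto, hDe₁, hDe₂, ?_⟩
    rw [ht, hteq]
  -- triple at the top eigenvalue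
  have hv₀eig' : (-⁅u₀,⁅u₀,v₀⁆⁆ : G) = (θ^2) • v₀ := by
    rw [hθ2, ← hSapp, hv₀eig]
  obtain ⟨v, w, hnv, hnw, hvw0, huv, huw, hvw⟩ := htriple θ v₀ hθpos hv₀ne hv₀eig'
  obtain ⟨c, hc⟩ : ∃ c : ℝ, c = θ / n u₀ := ⟨_, rfl⟩
  have hcpos : 0 < c := by rw [hc]; positivity
  have hvwc : ⁅v,w⁆ = c • u₀ := by rw [hvw, hc]
  have hn_zero : n 0 = 0 := by rw [hn]; simp
  have hvne : v ≠ 0 := by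
    intro h; rw [h, hn_zero] at hnv; norm_num at hnv
  obtain ⟨F, hmemF⟩ : ∃ F : Submodule ℝ G, ∀ x, (x ∈ F ↔ S x = μ • x) := by
    refine ⟨LinearMap.ker (S - μ • (LinearMap.id : G →ₗ[ℝ] G)), fun x => ?_⟩
    simp [LinearMap.mem_ker, LinearMap.sub_apply, LinearMap.smul_apply, sub_eq_zero]
  have hvF : v ∈ F := by
    rw [hmemF, hSapp, huv, lie_smul, huw, ← hθ2]
    module
  have hwF : w ∈ F := by
    rw [hmemF, hSapp, huw]
    rw [show ⁅u₀, -θ • v⁆ = -θ • ⁅u₀,v⁆ by rw [lie_smul], huv, ← hθ2]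
    module
  by_cases hF3 : 3 ≤ finrank ℝ F
  · -- CASE I : the top eigenspace has dimension ≥ 3
    have hbr : ∀ x y : G, S x = μ • x → S y = μ • y → ∃ α : ℝ, ⁅x,y⁆ = α • u₀ := by
      intro x y hxF hyF
      have hD2x : ⁅u₀,⁅u₀,x⁆⁆ = (-μ) • x := by
        have h := hSapp x; rw [hxF] at h
        rw [← neg_neg ⁅u₀,⁅u₀,x⁆⁆, ← h]; module
      have hD2y : ⁅u₀,⁅u₀,y⁆⁆ = (-μ) • y := by
        have h := hSapp y; rw [hyF] at h
        rw [← neg_neg ⁅u₀,⁅u₀,y⁆⁆, ← h]; module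
      have hDz : ⁅u₀,⁅x,y⁆⁆ = ⁅⁅u₀,x⁆,y⁆ + ⁅x,⁅u₀,y⁆⁆ := leibniz_lie u₀ x y
      have hD2z : ⁅u₀,⁅u₀,⁅x,y⁆⁆⁆ = (2:ℝ) • ⁅⁅u₀,x⁆,⁅u₀,y⁆⁆ - (2*μ) • ⁅x,y⁆ := by
        rw [hDz, lie_add, leibniz_lie u₀ ⁅u₀,x⁆ y, leibniz_lie u₀ x ⁅u₀,y⁆,
          hD2x, hD2y, smul_lie, lie_smul]
        module
      have hmid : ⁅u₀,⁅⁅u₀,x⁆,⁅u₀,y⁆⁆⁆ = (-μ) • ⁅u₀,⁅x,y⁆⁆ := by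
        rw [leibniz_lie u₀ ⁅u₀,x⁆ ⁅u₀,y⁆, hD2x, hD2y, smul_lie, lie_smul, hDz]
        module
      have hD3z : ⁅u₀,⁅u₀,⁅u₀,⁅x,y⁆⁆⁆⁆ = (-(4*μ)) • ⁅u₀,⁅x,y⁆⁆ := by
        rw [hD2z, lie_sub, lie_smul, lie_smul, hmid]
        module
      obtain ⟨β', hz'⟩ : ∃ β' : ℝ, ⁅u₀,⁅u₀,⁅x,y⁆⁆⁆ + (4*μ) • ⁅x,y⁆ = β' • u₀ := by
        apply hker
        rw [lie_add, hD3z, lie_smul]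
        module
      obtain ⟨z'', hz''⟩ : ∃ z'' : G, z'' = ⁅x,y⁆ - (β'/(4*μ)) • u₀ := ⟨_, rfl⟩
      have hμ4ne : (4*μ) ≠ 0 := by positivity
      have hDz'' : ⁅u₀,z''⁆ = ⁅u₀,⁅x,y⁆⁆ := by
        rw [hz'', lie_sub, lie_smul, lie_self, smul_zero, sub_zero]
      have hD2zeq : ⁅u₀,⁅u₀,⁅x,y⁆⁆⁆ = β' • u₀ - (4*μ) • ⁅x,y⁆ := by
        rw [← hz']; module
      have hzeq : ⁅u₀,⁅u₀,z''⁆⁆ + (4*μ) • z'' = 0 := by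
        rw [hDz'', hD2zeq, hz'', smul_sub, smul_smul,
          show (4*μ)*(β'/(4*μ)) = β' by field_simp]
        module
      have hkey : n ⁅u₀,z''⁆ = 4*μ * n z'' := by
        have h1 : κ (⁅u₀,⁅u₀,z''⁆⁆ + (4*μ) • z'') z'' = 0 := by rw [hzeq]; simp
        rw [map_add, LinearMap.add_apply, map_smul, LinearMap.smul_apply, smul_eq_mul] at h1
        have h2 : κ ⁅u₀,⁅u₀,z''⁆⁆ z'' = n ⁅u₀,z''⁆ := by
          have h := hskew u₀ ⁅u₀,z''⁆ z''
          rw [hn]; linarith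
        have h3 : κ z'' z'' = -n z'' := by rw [hn]; ring
        rw [h2, h3] at h1
        linarith
      have hz''0 : z'' = 0 := by
        apply hnz
        have h4 := hrayn z''
        rw [hkey] at h4
        have h5 : n z'' ≤ 0 := by nlinarith [hn0 z'', hμpos]
        linarith [hn0 z'']
      refine ⟨β'/(4*μ), ?_⟩
      rw [hz''] at hz''0
      exact sub_eq_zero.mp hz''0
    obtain ⟨φ, hφ⟩ : ∃ φ : G →ₗ[ℝ] ℝ, ∀ z, φ z = κ ⁅v,z⁆ u₀ :=
      ⟨(κ.flip u₀) ∘ₗ (LieAlgebra.ad ℝ G v), fun z => by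
        simp [LinearMap.flip_apply, LieAlgebra.ad_apply]⟩
    have hrk : 2 ≤ finrank ℝ (LinearMap.ker (φ.domRestrict F)) := by
      have h1 := LinearMap.finrank_range_add_finrank_ker (φ.domRestrict F)
      have h2 : finrank ℝ (LinearMap.range (φ.domRestrict F)) ≤ 1 := by
        have h3 := Submodule.finrank_le (LinearMap.range (φ.domRestrict F))
        rw [Module.finrank_self] at h3
        exact h3
      omega
    have hexy : ∃ y' : ↥F, φ.domRestrict F y' = 0 ∧ (y' : G) ∉ Submodule.span ℝ {v} := by
      by_contra hno
      push_neg at hno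
      have hle : (LinearMap.ker (φ.domRestrict F)).map F.subtype ≤ Submodule.span ℝ {v} := by
        rintro _ ⟨y', hy', rfl⟩
        exact hno y' hy'
      have h1 : finrank ℝ ((LinearMap.ker (φ.domRestrict F)).map F.subtype) ≤ 1 := by
        calc finrank ℝ ((LinearMap.ker (φ.domRestrict F)).map F.subtype)
            ≤ finrank ℝ (Submodule.span ℝ {v}) := Submodule.finrank_mono hle
          _ = 1 := finrank_span_singleton hvne
      rw [Submodule.finrank_map_subtype_eq] at h1
      omega
    obtain ⟨y', hy'0, hy'ns⟩ := hexy
    have hy'F : S (y' : G) = μ • (y' : G) := (hmemF _).mp y'.2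
    have hvμ : S v = μ • v := (hmemF _).mp hvF
    obtain ⟨α, hα⟩ := hbr v (y' : G) hvμ hy'F
    have hα0 : α = 0 := by
      have h1 : φ (y' : G) = 0 := hy'0
      rw [hφ, hα, map_smul, LinearMap.smul_apply, smul_eq_mul] at h1
      have hκu : κ u₀ u₀ = -n u₀ := by rw [hn]; ring
      rw [hκu] at h1
      rcases mul_eq_zero.mp h1 with h | h
      · exact h
      · exact absurd h (by simp; linarith)
    rw [hα0, zero_smul] at hα
    obtain ⟨t, ht⟩ := hcon v (y' : G) hvne hα
    exact hy'ns (by rw [ht]; exact Submodule.smul_mem _ t (Submodule.mem_span_singleton_self v))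
  · -- CASE II
    push_neg at hF3
    -- anything in F orthogonal to v and w vanishes
    have hκvv : κ v v = -1 := by have := hnv; rw [hn] at this; linarith
    have hκww : κ w w = -1 := by have := hnw; rw [hn] at this; linarith
    have hFx : ∀ x : G, x ∈ F → κ v x = 0 → κ w x = 0 → x = 0 := by
      intro x hxF hvx hwx
      by_contra hxne
      have hli : LinearIndependent ℝ ![v, w, x] := by
        rw [Fintype.linearIndependent_iff]
        intro g hg
        rw [Fin.sum_univ_three] at hg
        simp only [Matrix.cons_val_zero, Matrix.cons_val_one, Matrix.head_cons,
          Matrix.cons_val_two, Matrix.tail_cons] at hg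
        have happ : ∀ z : G, g 0 * κ v z + g 1 * κ w z + g 2 * κ x z = 0 := by
          intro z
          have h := congrArg (fun t => κ t z) hg
          simpa [map_add, LinearMap.add_apply, map_smul, LinearMap.smul_apply,
            smul_eq_mul] using h
        have h0 := happ v
        have h1 := happ w
        have h2 := happ x
        rw [hκvv, hsym w v, hvw0, hsym x v, hvx] at h0
        rw [hvw0, hκww, hsym x w, hwx] at h1
        have hg0 : g 0 = 0 := by linarith
        have hg1 : g 1 = 0 := by linarith
        rw [hvx, hwx, hg0, hg1] at h2
        have hκxx : κ x x < 0 := hneg x hxne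
        have hg2 : g 2 = 0 := by
          rcases mul_eq_zero.mp (by linarith : g 2 * κ x x = 0) with h | h
          · exact h
          · exact absurd h (ne_of_lt hκxx)
        intro i
        fin_cases i
        · exact hg0
        · exact hg1
        · exact hg2
      have hspan : Submodule.span ℝ (Set.range ![v,w,x]) ≤ F := by
        rw [Submodule.span_le]
        rintro _ ⟨i, rfl⟩
        fin_cases i
        · exact hvF
        · exact hwF
        · exact hxF
      have h3 : finrank ℝ (Submodule.span ℝ (Set.range ![v,w,x])) = 3 := by
        rw [finrank_span_eq_card hli]
        simp
      have h4 := Submodule.finrank_mono hspan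
      omega
    -- the subspace W orthogonal to u₀, v, w
    obtain ⟨T, hT⟩ : ∃ T : G →ₗ[ℝ] ℝ × ℝ × ℝ, ∀ z, T z = (κ u₀ z, κ v z, κ w z) :=
      ⟨(κ u₀).prod ((κ v).prod (κ w)), fun z => rfl⟩
    obtain ⟨W, hmemW, hWpos⟩ : ∃ W : Submodule ℝ G,
        (∀ z, z ∈ W ↔ (κ u₀ z = 0 ∧ κ v z = 0 ∧ κ w z = 0)) ∧ 0 < finrank ℝ W := by
      refine ⟨LinearMap.ker T, fun z => by simp [LinearMap.mem_ker, hT, Prod.ext_iff], ?_⟩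
      have h1 := LinearMap.finrank_range_add_finrank_ker T
      have h2 := Submodule.finrank_le (LinearMap.range T)
      have h3 : finrank ℝ (ℝ × ℝ × ℝ) = 3 := by
        rw [Module.finrank_prod, Module.finrank_prod, Module.finrank_self]
      omega
    have hWne : W ≠ ⊥ := by
      intro hbot
      rw [hbot, finrank_bot] at hWpos
      omega
    have hSW : ∀ z ∈ W, S z ∈ W := by
      intro z hz
      obtain ⟨hz1, hz2, hz3⟩ := (hmemW z).mp hz
      rw [hmemW]
      have hvDz : κ v ⁅u₀,z⁆ = 0 := by
        have h2 := hskew u₀ v z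
        rw [huv] at h2
        rw [h2, map_smul]
        simp only [LinearMap.smul_apply, smul_eq_mul]
        rw [hz3]
        ring
      have hwDz : κ w ⁅u₀,z⁆ = 0 := by
        have h2 := hskew u₀ w z
        rw [huw] at h2
        rw [h2]
        simp only [map_smul, LinearMap.smul_apply, smul_eq_mul, neg_smul, map_neg,
          LinearMap.neg_apply]
        rw [hz2]
        ring
      refine ⟨?_, ?_, ?_⟩
      · have h := hskew u₀ u₀ ⁅u₀,z⁆
        rw [lie_self] at h
        simp only [map_zero, LinearMap.zero_apply, neg_zero] at h
        rw [hSapp, map_neg, h]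
        ring
      · have h1 := hskew u₀ v ⁅u₀,z⁆
        rw [huv] at h1
        rw [hSapp, map_neg, h1]
        simp only [map_smul, LinearMap.smul_apply, smul_eq_mul]
        rw [hwDz]
        ring
      · have h1 := hskew u₀ w ⁅u₀,z⁆
        rw [huw] at h1
        rw [hSapp, map_neg, h1]
        simp only [neg_smul, map_neg, LinearMap.neg_apply, map_smul,
          LinearMap.smul_apply, smul_eq_mul]
        rw [hvDz]
        ring
    -- an eigenvector inside W
    obtain ⟨ν, x, hxW, hxne, hxeig, -⟩ :=
      aux_eigen_bilin B hBsymm hBpos W hWne S hSsym hSW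
    obtain ⟨hx1, hx2, hx3⟩ := (hmemW x).mp hxW
    have hnx : 0 < n x := hnpos x hxne
    have hD2x : ⁅u₀,⁅u₀,x⁆⁆ = (-ν) • x := by
      have h := hSapp x; rw [hxeig] at h
      rw [← neg_neg ⁅u₀,⁅u₀,x⁆⁆, ← h]; module
    have hnDx : n ⁅u₀,x⁆ = ν * n x := by
      have h2 : κ ⁅u₀,x⁆ ⁅u₀,x⁆ = -κ ⁅u₀,⁅u₀,x⁆⁆ x := hskew u₀ ⁅u₀,x⁆ x
      rw [hD2x] at h2
      simp only [map_smul, LinearMap.smul_apply, smul_eq_mul] at h2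
      rw [hn, hn, h2]
      ring
    have hDxne : ⁅u₀,x⁆ ≠ 0 := by
      intro h0
      obtain ⟨t, ht⟩ := hker x h0
      rw [ht, map_smul, smul_eq_mul] at hx1
      have hκu : κ u₀ u₀ = -n u₀ := by rw [hn]; ring
      rw [hκu] at hx1
      rcases mul_eq_zero.mp hx1 with h | h
      · exact hxne (by rw [ht, h, zero_smul])
      · linarith
    have hνpos : 0 < ν := by
      have h1 : 0 < n ⁅u₀,x⁆ := hnpos _ hDxne
      nlinarith [hnDx]
    have hνμ : ν ≤ μ := by
      have h := hrayn x
      rw [hnDx] at h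
      exact le_of_mul_le_mul_right (by linarith) hnx
    have hνne : ν ≠ μ := by
      intro heq
      have hxF : x ∈ F := by rw [hmemF, hxeig, heq]
      exact hxne (hFx x hxF hx2 hx3)
    obtain ⟨lam, hlam⟩ : ∃ lam : ℝ, lam = Real.sqrt ν := ⟨_, rfl⟩
    have hlam2 : lam^2 = ν := by rw [hlam]; exact Real.sq_sqrt hνpos.le
    have hlampos : 0 < lam := by rw [hlam]; exact Real.sqrt_pos.mpr hνpos
    have hlamne : lam ≠ 0 := ne_of_gt hlampos
    have hlamθ : lam < θ := by
      rw [hlam, hθ]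
      exact Real.sqrt_lt_sqrt hνpos.le (lt_of_le_of_ne hνμ hνne)
    obtain ⟨y, hy⟩ : ∃ y : G, y = lam⁻¹ • ⁅u₀,x⁆ := ⟨_, rfl⟩
    have hxw : ⁅u₀,x⁆ = lam • y := by
      rw [hy, smul_smul, mul_inv_cancel₀ hlamne, one_smul]
    have hyw : ⁅u₀,y⁆ = -lam • x := by
      rw [hy, lie_smul, hD2x, smul_smul, ← hlam2,
        show lam⁻¹ * -lam^2 = -lam by field_simp]
    -- STAGE 1 : lam = θ/2
    obtain ⟨hz₁0, hz₂0⟩ : (⁅v,x⁆ - ⁅w,y⁆ = 0) ∧ (⁅w,x⁆ + ⁅v,y⁆ = 0) := by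
      have hE := aux_E_wt u₀ v w θ lam huv huw x y hxw hyw
      exact hkill (lam+θ) _ _ hE.1 hE.2 (by nlinarith [hθ2])
    obtain ⟨x₁, hx₁⟩ : ∃ x₁ : G, x₁ = ⁅v,x⁆ + ⁅w,y⁆ := ⟨_, rfl⟩
    obtain ⟨y₁, hy₁⟩ : ∃ y₁ : G, y₁ = ⁅v,y⁆ - ⁅w,x⁆ := ⟨_, rfl⟩
    have hwt₁ : ⁅u₀,x₁⁆ = (lam - θ) • y₁ ∧ ⁅u₀,y₁⁆ = -(lam-θ) • x₁ := by
      rw [hx₁, hy₁]; exact aux_F_wt u₀ v w θ lam huv huw x y hxw hyw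
    obtain ⟨hx₂0, hy₂0⟩ : (⁅v,x₁⁆ + ⁅w,y₁⁆ = 0) ∧ (⁅v,y₁⁆ - ⁅w,x₁⁆ = 0) := by
      have hF2 := aux_F_wt u₀ v w θ (lam-θ) huv huw x₁ y₁ hwt₁.1 hwt₁.2
      have hb : 0 < (θ - lam) * (3*θ - lam) :=
        mul_pos (by linarith) (by linarith)
      exact hkill (lam-θ-θ) _ _ hF2.1 hF2.2 (by nlinarith [hθ2, hb])
    have hEx₁ : ⁅v,x₁⁆ - ⁅w,y₁⁆ = (-(2*c*lam)) • x := by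
      have h := aux_comm_fst u₀ v w c hvwc x y
      rw [← hx₁, ← hy₁, hz₁0, hz₂0, hyw] at h
      simp only [lie_zero, add_zero, zero_add, smul_smul] at h
      rw [h]
      module
    have hEy₁ : ⁅w,x₁⁆ + ⁅v,y₁⁆ = (-(2*c*lam)) • y := by
      have h := aux_comm_snd u₀ v w c hvwc x y
      rw [← hx₁, ← hy₁, hz₁0, hz₂0, hxw] at h
      simp only [lie_zero, sub_zero, zero_sub, smul_smul] at h
      rw [h]
      module
    have hmain_a : (0:G) = (-(2*c*(2*lam-θ))) • x₁ := by
      have h := aux_comm_fst u₀ v w c hvwc x₁ y₁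
      rw [hx₂0, hy₂0, hEx₁, hEy₁, hwt₁.2] at h
      simp only [lie_zero, sub_zero, lie_smul, smul_smul] at h
      rw [hx₁] at h ⊢
      linear_combination (norm := module) h
    have hmain_b : (0:G) = (-(2*c*(2*lam-θ))) • y₁ := by
      have h := aux_comm_snd u₀ v w c hvwc x₁ y₁
      rw [hx₂0, hy₂0, hEy₁, hEx₁, hwt₁.1] at h
      simp only [lie_zero, add_zero, sub_zero, zero_sub, lie_smul, smul_smul] at h
      rw [hy₁] at h ⊢
      linear_combination (norm := module) h
    have hθlam : θ = 2*lam := by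
      by_contra hne2
      have hσ : (-(2*c*(2*lam-θ))) ≠ 0 := by
        intro h0
        have hcne : c ≠ 0 := ne_of_gt hcpos
        have : 2*lam - θ = 0 := by
          rcases mul_eq_zero.mp (by linarith : (2*c)*(2*lam-θ) = 0) with h | h
          · exfalso; exact hcne (by linarith)
          · exact h
        exact hne2 (by linarith)
      have hx₁0 : x₁ = 0 := by
        rcases smul_eq_zero.mp hmain_a.symm with h | h
        · exact absurd h hσ
        · exact h
      have hy₁0 : y₁ = 0 := by
        rcases smul_eq_zero.mp hmain_b.symm with h | h
        · exact absurd h hσ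
        · exact h
      have h0 : (-(2*c*lam)) • x = 0 := by
        rw [← hEx₁, hx₁0, hy₁0, lie_zero, lie_zero, sub_zero]
      rcases smul_eq_zero.mp h0 with h | h
      · have h5 : 0 < c * lam := mul_pos hcpos hlampos
        have h6 : 2*c*lam = 2*(c*lam) := by ring
        exact absurd rfl (by intro _; linarith : ¬ (0:ℝ) = 0)
      · exact hxne h
    -- STAGE 2 : the five-term string gives a contradiction
    have hxeig2 : (-⁅u₀,⁅u₀,x⁆⁆ : G) = (lam^2) • x := by
      rw [hD2x, hlam2]; module
    obtain ⟨v', w', hnv', hnw', hv'w'0, hu'v', hu'w', hv'w'⟩ :=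
      htriple lam x hlampos hxne hxeig2
    obtain ⟨c', hc'⟩ : ∃ c' : ℝ, c' = lam / n u₀ := ⟨_, rfl⟩
    have hc'pos : 0 < c' := by rw [hc']; positivity
    have hv'w'c : ⁅v',w'⁆ = c' • u₀ := by rw [hv'w', hc']
    have hκv'v' : κ v' v' = -1 := by have := hnv'; rw [hn] at this; linarith
    have hκw'w' : κ w' w' = -1 := by have := hnw'; rw [hn] at this; linarith
    obtain ⟨hE0a, hE0b⟩ : (⁅v',v⁆ - ⁅w',w⁆ = 0) ∧ (⁅w',v⁆ + ⁅v',w⁆ = 0) := by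
      have hE := aux_E_wt u₀ v' w' lam θ hu'v' hu'w' v w huv huw
      exact hkill (θ+lam) _ _ hE.1 hE.2 (by nlinarith [hθ2])
    obtain ⟨x₁', hx₁'⟩ : ∃ z : G, z = ⁅v',v⁆ + ⁅w',w⁆ := ⟨_, rfl⟩
    obtain ⟨y₁', hy₁'⟩ : ∃ z : G, z = ⁅v',w⁆ - ⁅w',v⁆ := ⟨_, rfl⟩
    have hwtQ₁ : ⁅u₀,x₁'⁆ = (θ-lam) • y₁' ∧ ⁅u₀,y₁'⁆ = -(θ-lam) • x₁' := by
      rw [hx₁', hy₁']; exact aux_F_wt u₀ v' w' lam θ hu'v' hu'w' v w huv huw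
    obtain ⟨x₂', hx₂'⟩ : ∃ z : G, z = ⁅v',x₁'⁆ + ⁅w',y₁'⁆ := ⟨_, rfl⟩
    obtain ⟨y₂', hy₂'⟩ : ∃ z : G, z = ⁅v',y₁'⁆ - ⁅w',x₁'⁆ := ⟨_, rfl⟩
    have hwtQ₂ : ⁅u₀,x₂'⁆ = (θ-lam-lam) • y₂' ∧ ⁅u₀,y₂'⁆ = -(θ-lam-lam) • x₂' := by
      rw [hx₂', hy₂']
      exact aux_F_wt u₀ v' w' lam (θ-lam) hu'v' hu'w' x₁' y₁' hwtQ₁.1 hwtQ₁.2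
    have hDx₂' : ⁅u₀,x₂'⁆ = 0 := by
      rw [hwtQ₂.1, show θ-lam-lam = (0:ℝ) by rw [hθlam]; ring, zero_smul]
    have hDy₂' : ⁅u₀,y₂'⁆ = 0 := by
      rw [hwtQ₂.2, show θ-lam-lam = (0:ℝ) by rw [hθlam]; ring, neg_zero, zero_smul]
    obtain ⟨a, ha⟩ := hker x₂' hDx₂'
    obtain ⟨b, hb⟩ := hker y₂' hDy₂'
    -- E-values along the string
    have hEQ₁a : ⁅v',x₁'⁆ - ⁅w',y₁'⁆ = (-(2*c'*θ)) • v := by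
      have h := aux_comm_fst u₀ v' w' c' hv'w'c v w
      rw [← hx₁', ← hy₁', hE0a, hE0b, huw] at h
      simp only [lie_zero, add_zero, zero_add, smul_smul] at h
      rw [h]
      module
    have hEQ₁b : ⁅w',x₁'⁆ + ⁅v',y₁'⁆ = (-(2*c'*θ)) • w := by
      have h := aux_comm_snd u₀ v' w' c' hv'w'c v w
      rw [← hx₁', ← hy₁', hE0b, hE0a, huv] at h
      simp only [lie_zero, sub_zero, zero_sub, smul_smul] at h
      rw [h]
      module
    have hEQ₂a : ⁅v',x₂'⁆ - ⁅w',y₂'⁆ = (-(2*c'*(2*θ-lam))) • x₁' := by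
      have h := aux_comm_fst u₀ v' w' c' hv'w'c x₁' y₁'
      rw [← hx₂', ← hy₂', hEQ₁a, hEQ₁b, hwtQ₁.2] at h
      simp only [lie_smul, smul_smul] at h
      rw [hx₁'] at h ⊢
      linear_combination (norm := module) h
    have hEQ₂b : ⁅w',x₂'⁆ + ⁅v',y₂'⁆ = (-(2*c'*(2*θ-lam))) • y₁' := by
      have h := aux_comm_snd u₀ v' w' c' hv'w'c x₁' y₁'
      rw [← hx₂', ← hy₂', hEQ₁b, hEQ₁a, hwtQ₁.1] at h
      simp only [lie_smul, smul_smul] at h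
      rw [hy₁'] at h ⊢
      linear_combination (norm := module) h
    obtain ⟨x₃', hx₃'⟩ : ∃ z : G, z = ⁅v',x₂'⁆ + ⁅w',y₂'⁆ := ⟨_, rfl⟩
    obtain ⟨y₃', hy₃'⟩ : ∃ z : G, z = ⁅v',y₂'⁆ - ⁅w',x₂'⁆ := ⟨_, rfl⟩
    have hwtQ₃ : ⁅u₀,x₃'⁆ = (0-lam) • y₃' ∧ ⁅u₀,y₃'⁆ = -(0-lam) • x₃' := by
      rw [hx₃', hy₃']
      exact aux_F_wt u₀ v' w' lam 0 hu'v' hu'w' x₂' y₂'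
        (by rw [hDx₂', zero_smul]) (by rw [hDy₂', neg_zero, zero_smul])
    have hEQ₃a : ⁅v',x₃'⁆ - ⁅w',y₃'⁆ = (-(2*c'*(2*θ-lam))) • x₂' := by
      have h := aux_comm_fst u₀ v' w' c' hv'w'c x₂' y₂'
      rw [← hx₃', ← hy₃', hEQ₂a, hEQ₂b, hDy₂'] at h
      simp only [lie_smul, smul_zero, add_zero] at h
      rw [hx₂']
      linear_combination (norm := module) h
    have hEQ₃b : ⁅w',x₃'⁆ + ⁅v',y₃'⁆ = (-(2*c'*(2*θ-lam))) • y₂' := by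
      have h := aux_comm_snd u₀ v' w' c' hv'w'c x₂' y₂'
      rw [← hx₃', ← hy₃', hEQ₂b, hEQ₂a, hDx₂'] at h
      simp only [lie_smul, smul_zero, sub_zero] at h
      rw [hy₂']
      linear_combination (norm := module) h
    -- closed forms for the middle of the string
    have hv'u : ⁅v',u₀⁆ = -(lam • w') := by
      rw [← lie_skew, hu'v']
    have hw'u : ⁅w',u₀⁆ = lam • v' := by
      rw [← lie_skew, hu'w']; module
    have hx₃c : x₃' = (b*lam) • v' - (a*lam) • w' := by
      rw [hx₃', ha, hb, lie_smul, lie_smul, hv'u, hw'u]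
      module
    have hy₃c : y₃' = -((b*lam)) • w' - (a*lam) • v' := by
      rw [hy₃', ha, hb, lie_smul, lie_smul, hv'u, hw'u]
      module
    have hw'v' : ⁅w',v'⁆ = -(c' • u₀) := by
      rw [← lie_skew, hv'w'c]
    have hx₄0 : ⁅v',x₃'⁆ + ⁅w',y₃'⁆ = 0 := by
      rw [hx₃c, hy₃c, lie_sub, lie_sub, lie_smul, lie_smul, lie_smul, lie_smul,
        lie_self, lie_self, hv'w'c, hw'v']
      module
    have hy₄0 : ⁅v',y₃'⁆ - ⁅w',x₃'⁆ = 0 := by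
      rw [hx₃c, hy₃c, lie_sub, lie_sub, lie_smul, lie_smul, lie_smul, lie_smul,
        lie_self, lie_self, hv'w'c, hw'v']
      module
    -- the final identity forces x₃' = y₃' = 0
    have hfin_a : (0:G) = ((-(2*c'*(2*θ-lam))) + 2*c'*lam) • x₃' := by
      have h := aux_comm_fst u₀ v' w' c' hv'w'c x₃' y₃'
      rw [hx₄0, hy₄0, hEQ₃a, hEQ₃b, hwtQ₃.2] at h
      simp only [lie_zero, sub_zero, lie_smul, smul_smul] at h
      rw [hx₃'] at h ⊢
      linear_combination (norm := module) h
    have hfin_b : (0:G) = ((-(2*c'*(2*θ-lam))) + 2*c'*lam) • y₃' := by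
      have h := aux_comm_snd u₀ v' w' c' hv'w'c x₃' y₃'
      rw [hx₄0, hy₄0, hEQ₃b, hEQ₃a, hwtQ₃.1] at h
      simp only [lie_zero, add_zero, sub_zero, zero_sub, lie_smul, smul_smul] at h
      rw [hy₃'] at h ⊢
      linear_combination (norm := module) h
    have hcoef : ((-(2*c'*(2*θ-lam))) + 2*c'*lam) ≠ 0 := by
      rw [hθlam]
      intro h0
      have h1 : 0 < c' * lam := mul_pos hc'pos hlampos
      have h3 : -(2*c'*(2*(2*lam)-lam)) + 2*c'*lam = -4*(c'*lam) := by ring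
      linarith
    have hx₃0 : x₃' = 0 := by
      rcases smul_eq_zero.mp hfin_a.symm with h | h
      · exact absurd h hcoef
      · exact h
    have hy₃0 : y₃' = 0 := by
      rcases smul_eq_zero.mp hfin_b.symm with h | h
      · exact absurd h hcoef
      · exact h
    -- hence a = b = 0
    have hab : a = 0 ∧ b = 0 := by
      have hxc := hx₃c
      rw [hx₃0] at hxc
      have h2 := congrArg (fun z => κ z w') hxc.symm
      have h3 := congrArg (fun z => κ z v') hxc.symm
      simp only [map_sub, map_smul, LinearMap.sub_apply, LinearMap.smul_apply,
        smul_eq_mul, map_zero, LinearMap.zero_apply] at h2 h3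
      rw [hv'w'0, hκw'w'] at h2
      rw [hκv'v', hsym w' v', hv'w'0] at h3
      constructor
      · have ha1 : a * lam = 0 := by linarith
        rcases mul_eq_zero.mp ha1 with h | h
        · exact h
        · exact absurd h hlamne
      · have hb1 : b * lam = 0 := by linarith
        rcases mul_eq_zero.mp hb1 with h | h
        · exact h
        · exact absurd h hlamne
    have hx₂z : x₂' = 0 := by rw [ha, hab.1, zero_smul]
    have hy₂z : y₂' = 0 := by rw [hb, hab.2, zero_smul]
    -- back-substitution up the string
    have hγne : (-(2*c'*(2*θ-lam))) ≠ 0 := by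
      have h1 : 0 < 2*θ - lam := by linarith
      have h2 : 0 < c' * (2*θ - lam) := mul_pos hc'pos h1
      intro h0
      have h3 : 2*c'*(2*θ-lam) = 2*(c'*(2*θ-lam)) := by ring
      linarith
    have hx₁z : x₁' = 0 := by
      have h := hEQ₂a
      rw [hx₂z, hy₂z, lie_zero, lie_zero, sub_zero] at h
      rcases smul_eq_zero.mp h.symm with h' | h'
      · exact absurd h' hγne
      · exact h'
    have hy₁z : y₁' = 0 := by
      have h := hEQ₂b
      rw [hx₂z, hy₂z, lie_zero, lie_zero, add_zero] at h
      rcases smul_eq_zero.mp h.symm with h' | h'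
      · exact absurd h' hγne
      · exact h'
    have hv0 : v = 0 := by
      have h := hEQ₁a
      rw [hx₁z, hy₁z, lie_zero, lie_zero, sub_zero] at h
      have hcθ : (-(2*c'*θ)) ≠ 0 := by
        have h2 : 0 < c' * θ := mul_pos hc'pos hθpos
        intro h0
        have h3 : 2*c'*θ = 2*(c'*θ) := by ring
        linarith
      rcases smul_eq_zero.mp h.symm with h' | h'
      · exact absurd h' hcθ
      · exact h'
    exact hvne hv0

set_option maxHeartbeats 1000000 in
/-- **Proposition A, part 2: existence of translation invariant two-forms with
non-zero torsion.** -/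
theorem exists_invariant_two_form_with_torsion
    {𝓖 : Type*} [LieRing 𝓖] [LieAlgebra ℝ 𝓖] [FiniteDimensional ℝ 𝓖]
    -- `𝓖` is semisimple: `κ` is nondegenerate (Cartan's criterion)
    (hnondeg : ∀ u : 𝓖, (∀ v : 𝓖, killing 𝓖 u v = 0) → u = 0)
    -- `κ` is negative definite (compact type)
    (hnegdef : ∀ u : 𝓖, u ≠ 0 → killing 𝓖 u u < 0)
    -- `dim 𝓖 > 3`
    (hdim : 3 < Module.finrank ℝ 𝓖) :
    ∃ R : 𝓖, R ≠ 0 ∧ ∃ p : 𝓖 →ₗ[ℝ] 𝓖 →ₗ[ℝ] ℝ,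
      -- `p` is skew-symmetric,
      (∀ u v : 𝓖, p u v = - p v u) ∧
      -- `ad(R)`-invariant,
      (∀ u v : 𝓖, p ⁅R, u⁆ v + p u ⁅R, v⁆ = 0) ∧
      -- and has non-zero torsion
      (∃ u v w : 𝓖, p ⁅u, v⁆ w + p ⁅v, w⁆ u + p ⁅w, u⁆ v ≠ 0) := by
  classical
  have hkf : ∀ u v : 𝓖, killing 𝓖 u v = killingForm ℝ 𝓖 u v := fun u v => rfl
  obtain ⟨κ, hκdef⟩ : ∃ κ : 𝓖 →ₗ[ℝ] 𝓖 →ₗ[ℝ] ℝ, κ = killingForm ℝ 𝓖 := ⟨_, rfl⟩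
  have hκapp : ∀ u v : 𝓖, κ u v = killing 𝓖 u v := by
    intro u v; rw [hκdef, hkf]
  have hsym : ∀ a b : 𝓖, κ a b = κ b a := by
    intro a b; rw [hκdef]; exact LieModule.traceForm_comm ℝ 𝓖 𝓖 a b
  have hinv : ∀ a b c : 𝓖, κ ⁅a,b⁆ c = κ a ⁅b,c⁆ := by
    intro a b c; rw [hκdef]; exact LieModule.traceForm_apply_lie_apply ℝ 𝓖 𝓖 a b c
  have hneg : ∀ a : 𝓖, a ≠ 0 → κ a a < 0 := by
    intro a ha; rw [hκapp]; exact hnegdef a ha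
  have hnd : ∀ a : 𝓖, (∀ b, κ a b = 0) → a = 0 := by
    intro a h
    exact hnondeg a (fun b => by rw [← hκapp]; exact h b)
  obtain ⟨R, X, hR0, hRX, hind⟩ := aux_rank κ hsym hinv hneg hdim
  obtain ⟨p, hp⟩ : ∃ p : 𝓖 →ₗ[ℝ] 𝓖 →ₗ[ℝ] ℝ,
      ∀ a b, p a b = κ R a * κ X b - κ X a * κ R b := by
    refine ⟨LinearMap.mk₂ ℝ (fun a b => κ R a * κ X b - κ X a * κ R b)
      ?_ ?_ ?_ ?_, fun a b => rfl⟩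
    · intro a a' b; simp only [map_add, LinearMap.add_apply]; ring
    · intro t a b; simp only [map_smul, LinearMap.smul_apply, smul_eq_mul]; ring
    · intro a b b'; simp only [map_add]; ring
    · intro t a b; simp only [map_smul, smul_eq_mul]; ring
  have hκRlie : ∀ z : 𝓖, κ R ⁅R,z⁆ = 0 := by
    intro z
    have h := hinv R R z
    rw [lie_self] at h
    simp only [map_zero, LinearMap.zero_apply] at h
    exact h.symm
  have hXR : ⁅X,R⁆ = 0 := by rw [← lie_skew, hRX, neg_zero]
  have hκXlie : ∀ z : 𝓖, κ X ⁅R,z⁆ = 0 := by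
    intro z
    have h := hinv X R z
    rw [hXR] at h
    simp only [map_zero, LinearMap.zero_apply] at h
    exact h.symm
  have hskewp : ∀ u v : 𝓖, p u v = - p v u := by
    intro u v; rw [hp, hp]; ring
  have hinvp : ∀ u v : 𝓖, p ⁅R, u⁆ v + p u ⁅R, v⁆ = 0 := by
    intro u v
    rw [hp, hp, hκRlie, hκXlie, hκRlie, hκXlie]
    ring
  -- construction of the torsion witnesses
  have hκRR : κ R R < 0 := hneg R hR0
  have hκRRne : κ R R ≠ 0 := ne_of_lt hκRR
  obtain ⟨w₀, hw₀⟩ : ∃ w₀ : 𝓖, w₀ = X - (κ R X / κ R R) • R := ⟨_, rfl⟩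
  have hw₀ne : w₀ ≠ 0 := by
    intro h0
    rw [hw₀, sub_eq_zero] at h0
    exact hind (κ R X / κ R R) h0
  have hκRw₀ : κ R w₀ = 0 := by
    rw [hw₀, map_sub, map_smul, smul_eq_mul]
    field_simp; ring
  have hXeq : X = w₀ + (κ R X / κ R R) • R := by rw [hw₀]; module
  have hκw₀w₀ : κ w₀ w₀ < 0 := hneg w₀ hw₀ne
  have hκXw₀ : κ X w₀ = κ w₀ w₀ := by
    rw [hXeq, map_add, map_smul, LinearMap.add_apply, LinearMap.smul_apply,
      smul_eq_mul, hκRw₀]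
    ring
  have hκXw₀neg : κ X w₀ < 0 := by rw [hκXw₀]; exact hκw₀w₀
  have hκXw₀ne : κ X w₀ ≠ 0 := ne_of_lt hκXw₀neg
  obtain ⟨wit, hwit⟩ : ∃ z : 𝓖, z = (κ X w₀)⁻¹ • w₀ := ⟨_, rfl⟩
  have hκRwit : κ R wit = 0 := by
    rw [hwit, map_smul, smul_eq_mul, hκRw₀, mul_zero]
  have hκXwit : κ X wit = 1 := by
    rw [hwit, map_smul, smul_eq_mul]
    field_simp
  have hRw₀ : ⁅R,w₀⁆ = 0 := by
    rw [hw₀, lie_sub, lie_smul, hRX, lie_self, smul_zero, sub_zero]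
  -- a vector orthogonal to R and X which is moved by ad R
  have hu : ∃ u : 𝓖, κ R u = 0 ∧ κ X u = 0 ∧ ⁅R,u⁆ ≠ 0 := by
    by_contra hno
    push_neg at hno
    have hκw₀w₀ne : κ w₀ w₀ ≠ 0 := ne_of_lt hκw₀w₀
    have hadR : ∀ y : 𝓖, ⁅R,y⁆ = 0 := by
      intro y
      obtain ⟨y', hy'⟩ : ∃ y' : 𝓖,
          y' = y - (κ R y / κ R R) • R - (κ w₀ y / κ w₀ w₀) • w₀ := ⟨_, rfl⟩
      have h1 : κ R y' = 0 := by
        rw [hy', map_sub, map_sub, map_smul, map_smul, smul_eq_mul, smul_eq_mul,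
          hκRw₀]
        field_simp; ring
      have h2 : κ w₀ y' = 0 := by
        rw [hy', map_sub, map_sub, map_smul, map_smul, smul_eq_mul, smul_eq_mul,
          hsym w₀ R, hκRw₀]
        field_simp; ring
      have h3 : κ X y' = 0 := by
        rw [hXeq, map_add, map_smul, LinearMap.add_apply, LinearMap.smul_apply,
          smul_eq_mul, h1, h2]
        ring
      have h4 := hno y' h1 h3
      have hyeq : y = y' + (κ R y / κ R R) • R + (κ w₀ y / κ w₀ w₀) • w₀ := by
        rw [hy']; module
      rw [hyeq, lie_add, lie_add, lie_smul, lie_smul, h4, hRw₀, lie_self]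
      simp
    apply hR0
    apply hnd
    intro b
    rw [hκapp]
    unfold killing
    have hadR0 : LieAlgebra.ad ℝ 𝓖 R = 0 := by
      ext z
      simp [LieAlgebra.ad_apply, hadR z]
    rw [hadR0, LinearMap.zero_comp, map_zero]
  obtain ⟨u, hκRu, hκXu, hRune⟩ := hu
  obtain ⟨vv, hvv⟩ : ∃ vv : 𝓖, vv = ⁅R,u⁆ := ⟨_, rfl⟩
  have hvvne : vv ≠ 0 := by rw [hvv]; exact hRune
  have hκRv : κ R vv = 0 := by rw [hvv]; exact hκRlie u
  have hκXv : κ X vv = 0 := by rw [hvv]; exact hκXlie u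
  have hval : κ R ⁅u,vv⁆ = κ vv vv := by
    have h := hinv R u vv
    rw [← h, hvv]
  refine ⟨R, hR0, p, hskewp, hinvp, u, vv, wit, ?_⟩
  rw [hp, hp, hp, hκRu, hκXu, hκRv, hκXv, hκRwit, hκXwit, hval]
  have hlt : κ vv vv < 0 := hneg vv hvvne
  intro hcon
  ring_nf at hcon
  nlinarith [hlt, hcon]

end
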